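/- Let E, J, R ∈ ℂ^{n×n} with E positive semidefinite, J skew-Hermitian (J = −J*), R positive semidefinite, partitioned conformally as E = [[E11, E12],[E12*, E22]], J = [[J11, J12],[−J12*, J22]], R = [[R11, 0],[0, 0]] with R11 ∈ ℂ^{n1×n1} positive definite and blocks of sizes n1 + n2 = n. Then J − R is nonsingular if and only if rank([J12; J22]) = n2 (the stacked matrix [J12 over J22] has full column rank n2). -/

import Mathlib

open Matrix
open scoped ComplexOrder

/-- Full column rank iff trivial kernel of `mulVec`. -/
lemma rank_eq_width_iff_mulVec {m : Type*} [Fintype m] {n2 : ℕ}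
    (M : Matrix m (Fin n2) ℂ) :
    M.rank = n2 ↔ ∀ v : Fin n2 → ℂ, M *ᵥ v = 0 → v = 0 := by
  have hrn := LinearMap.finrank_range_add_finrank_ker M.mulVecLin
  have hfin : Module.finrank ℂ (Fin n2 → ℂ) = n2 := by simp
  rw [hfin] at hrn
  have h1 : M.rank = n2 ↔ Module.finrank ℂ (LinearMap.ker M.mulVecLin) = 0 := by
    unfold Matrix.rank
    omega
  rw [h1, Submodule.finrank_eq_zero, LinearMap.ker_eq_bot']
  constructor
  · intro h v hv
    exact h v (by simpa [Matrix.mulVecLin_apply] using hv)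
  · intro h v hv
    exact h v (by simpa [Matrix.mulVecLin_apply] using hv)

/-- Chu–Mehrmann Lemma 3.3(i): J − R is nonsingular iff [J12; J22] has full column rank n2. -/
theorem stmt_1 {n1 n2 : ℕ}
    (E11 J11 R11 : Matrix (Fin n1) (Fin n1) ℂ)
    (E12 J12 : Matrix (Fin n1) (Fin n2) ℂ)
    (E22 J22 : Matrix (Fin n2) (Fin n2) ℂ)
    (hE : (Matrix.fromBlocks E11 E12 E12ᴴ E22).PosSemidef)
    (hJ : (Matrix.fromBlocks J11 J12 (-J12ᴴ) J22)ᴴ = -(Matrix.fromBlocks J11 J12 (-J12ᴴ) J22))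
    (hR : (Matrix.fromBlocks R11 0 0 (0 : Matrix (Fin n2) (Fin n2) ℂ)).PosSemidef)
    (hR11 : R11.PosDef) :
    (Matrix.fromBlocks J11 J12 (-J12ᴴ) J22 -
        Matrix.fromBlocks R11 0 0 (0 : Matrix (Fin n2) (Fin n2) ℂ)).det ≠ 0
    ↔ (Matrix.fromRows J12 J22).rank = n2 := by
  set J := Matrix.fromBlocks J11 J12 (-J12ᴴ) J22 with hJdef
  set R := Matrix.fromBlocks R11 0 0 (0 : Matrix (Fin n2) (Fin n2) ℂ) with hRdef
  rw [rank_eq_width_iff_mulVec]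
  rw [Ne, ← Matrix.exists_mulVec_eq_zero_iff, not_exists]
  constructor
  · -- det ≠ 0 → full column rank
    intro h v hv
    by_contra hv0
    refine h (Sum.elim 0 v) ⟨?_, ?_⟩
    · intro h0
      apply hv0
      funext i
      have := congrFun h0 (Sum.inr i)
      simpa using this
    · have hv1 : J12 *ᵥ v = 0 := by
        funext i; have := congrFun hv (Sum.inl i); simpa using this
      have hv2 : J22 *ᵥ v = 0 := by
        funext i; have := congrFun hv (Sum.inr i); simpa using this
      rw [Matrix.sub_mulVec, hJdef, hRdef, Matrix.fromBlocks_mulVec,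
        Matrix.fromBlocks_mulVec]
      funext i
      cases i <;> simp [hv1, hv2]
  · -- full column rank → det ≠ 0
    intro h
    rintro v ⟨hv0, hv⟩
    have hdot : star v ⬝ᵥ (J - R) *ᵥ v = 0 := by rw [hv, dotProduct_zero]
    rw [Matrix.sub_mulVec, dotProduct_sub, sub_eq_zero] at hdot
    set c : ℂ := star v ⬝ᵥ R *ᵥ v with hc
    -- c is real (in fact nonneg), since R is PSD
    have hcr : (starRingEnd ℂ) c = c := by
      have h0 : (0 : ℂ) ≤ c := hR.dotProduct_mulVec_nonneg v
      rw [Complex.le_def] at h0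
      exact Complex.conj_eq_iff_im.mpr h0.2.symm
    -- conj c = -c since c = star v ⬝ᵥ J *ᵥ v and J is skew-Hermitian
    have hcn : (starRingEnd ℂ) c = -c := by
      have e1 : (starRingEnd ℂ) c = star (J *ᵥ v) ⬝ᵥ v := by
        rw [← hdot, star_dotProduct]
        simp
      rw [e1, Matrix.star_mulVec, hJ, ← Matrix.dotProduct_mulVec,
        Matrix.neg_mulVec, dotProduct_neg, hdot]
    have hc0 : c = 0 := by
      have := hcr.symm.trans hcn
      linear_combination this / 2
    -- hence R v = 0, so R11 v1 = 0, so v1 = 0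
    have hRv : R *ᵥ v = 0 := (hR.dotProduct_mulVec_zero_iff v).mp hc0
    have hv1 : v ∘ Sum.inl = 0 := by
      have hR1 : R11 *ᵥ (v ∘ Sum.inl) = 0 := by
        funext i
        have := congrFun hRv (Sum.inl i)
        simpa [hRdef, Matrix.fromBlocks_mulVec] using this
      by_contra hne
      have := hR11.dotProduct_mulVec_pos hne
      rw [hR1, dotProduct_zero] at this
      exact lt_irrefl 0 this
    -- J v = 0
    have hJv : J *ᵥ v = 0 := by
      have : (J - R) *ᵥ v = 0 := hv
      rw [Matrix.sub_mulVec, hRv, sub_zero] at this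
      exact this
    -- then the stacked matrix kills v2
    have hst : Matrix.fromRows J12 J22 *ᵥ (v ∘ Sum.inr) = 0 := by
      funext i
      cases i with
      | inl i =>
        have := congrFun hJv (Sum.inl i)
        simpa [hJdef, Matrix.fromBlocks_mulVec, hv1] using this
      | inr i =>
        have := congrFun hJv (Sum.inr i)
        simpa [hJdef, Matrix.fromBlocks_mulVec, hv1] using this
    have hv2 : v ∘ Sum.inr = 0 := h _ hst
    apply hv0
    funext i
    cases i with
    | inl i => exact congrFun hv1 i
    | inr i => exact congrFun hv2 i
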